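/- Let $n \geq 1$ be a natural number. Consider the group $P$ presented by four generators $a_1, a_2, a_3, a_4$ subject to the five relations $b_1 = (a_1^{-1} a_2)^{10n} a_4^{-1} a_1^2$, $b_2 = a_2^{-1} a_3 (a_2^{-1} a_1)^{10n} a_2^{-1}$, $b_3 = (a_4^{-1} a_3)^{10n+3} a_3^{-1} a_2 a_3^{-2}$, $b_4 = a_1^{-1} a_4 (a_3^{-1} a_4)^{10n+3} a_4^{2}$, and $a_1$. Then $P$ is the trivial group. -/

import Mathlib

/-- The relators of the presentation of `π₁(Mₙ)` together with the extra relator `a₁`.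
Generators `a₁, a₂, a₃, a₄` correspond to `FreeGroup.of 0, ..., FreeGroup.of 3`. -/
def kanenobuRels (n : ℕ) : Set (FreeGroup (Fin 4)) :=
  let a : Fin 4 → FreeGroup (Fin 4) := fun i => FreeGroup.of i
  { ((a 0)⁻¹ * a 1) ^ (10 * n) * (a 3)⁻¹ * (a 0) ^ 2,
    (a 1)⁻¹ * a 2 * ((a 1)⁻¹ * a 0) ^ (10 * n) * (a 1)⁻¹,
    ((a 3)⁻¹ * a 2) ^ (10 * n + 3) * (a 2)⁻¹ * a 1 * ((a 2) ^ 2)⁻¹,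
    (a 0)⁻¹ * a 3 * ((a 2)⁻¹ * a 3) ^ (10 * n + 3) * (a 3) ^ 2,
    a 0 }

/-- The group presented by `⟨a₁,a₂,a₃,a₄ ∣ b₁,b₂,b₃,b₄,a₁⟩` is trivial,
i.e. `π₁(Mₙ) ⧸ ⟪a₁⟫ = 1`. -/
theorem stmt4 (n : ℕ) (hn : 1 ≤ n) : ∀ x : PresentedGroup (kanenobuRels n), x = 1 := by
  set R := kanenobuRels n with hR
  have mk1 : ∀ r ∈ R, PresentedGroup.mk R r = 1 := by
    intro r hr
    exact (QuotientGroup.eq_one_iff r).mpr (Subgroup.subset_normalClosure hr)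
  set A : PresentedGroup R := PresentedGroup.of 0 with hA
  set B : PresentedGroup R := PresentedGroup.of 1 with hB
  set C : PresentedGroup R := PresentedGroup.of 2 with hC
  set D : PresentedGroup R := PresentedGroup.of 3 with hD
  have h5 : A = 1 := by
    have := mk1 (FreeGroup.of 0) (by simp [hR, kanenobuRels])
    exact this
  have h1 : (A⁻¹ * B) ^ (10 * n) * D⁻¹ * A ^ 2 = 1 := by
    have := mk1 _ (show ((FreeGroup.of 0)⁻¹ * FreeGroup.of 1) ^ (10 * n) * (FreeGroup.of 3)⁻¹ * (FreeGroup.of 0) ^ 2 ∈ R by simp [hR, kanenobuRels])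
    simp only [map_mul, map_pow, map_inv] at this; exact this
  have h2 : B⁻¹ * C * (B⁻¹ * A) ^ (10 * n) * B⁻¹ = 1 := by
    have := mk1 _ (show (FreeGroup.of 1)⁻¹ * FreeGroup.of 2 * ((FreeGroup.of 1)⁻¹ * FreeGroup.of 0) ^ (10 * n) * (FreeGroup.of 1)⁻¹ ∈ R by simp [hR, kanenobuRels])
    simp only [map_mul, map_pow, map_inv] at this; exact this
  have h3 : (D⁻¹ * C) ^ (10 * n + 3) * C⁻¹ * B * (C ^ 2)⁻¹ = 1 := by
    have := mk1 _ (show ((FreeGroup.of 3)⁻¹ * FreeGroup.of 2) ^ (10 * n + 3) * (FreeGroup.of 2)⁻¹ * FreeGroup.of 1 * ((FreeGroup.of 2) ^ 2)⁻¹ ∈ R by simp [hR, kanenobuRels])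
    simp only [map_mul, map_pow, map_inv] at this; exact this
  have h4 : A⁻¹ * D * (C⁻¹ * D) ^ (10 * n + 3) * D ^ 2 = 1 := by
    have := mk1 _ (show (FreeGroup.of 0)⁻¹ * FreeGroup.of 3 * ((FreeGroup.of 2)⁻¹ * FreeGroup.of 3) ^ (10 * n + 3) * (FreeGroup.of 3) ^ 2 ∈ R by simp [hR, kanenobuRels])
    simp only [map_mul, map_pow, map_inv] at this; exact this
  rw [h5] at h1 h2 h4
  simp at h1 h2 h4
  -- h1 : B ^ (10 * n) * D⁻¹ = 1
  -- h2 : B⁻¹ * C * (B ^ (10 * n))⁻¹ * B⁻¹ = 1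
  -- h4 : D * (C⁻¹ * D) ^ (10 * n + 3) * D ^ 2 = 1
  have eD : D = B ^ (10 * n) := (mul_inv_eq_one.mp h1).symm
  have eC : C = B ^ (10 * n + 2) := by
    have h2' : B⁻¹ * C * (B ^ (10 * n))⁻¹ * B⁻¹ =
        B⁻¹ * B ^ (10 * n + 2) * (B ^ (10 * n))⁻¹ * B⁻¹ := by
      rw [h2]; group
    exact mul_left_cancel (mul_right_cancel (mul_right_cancel h2'))
  have hB3 : B ^ (10 * (n : ℤ) - 1) = 1 := by
    have h3' : B ^ (1 - 10 * (n : ℤ)) = 1 := by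
      rw [← h3, eC, eD]; group
    rw [show (10 * (n : ℤ) - 1) = -(1 - 10 * (n : ℤ)) by ring, zpow_neg, h3', inv_one]
  have hB4 : B ^ (10 * (n : ℤ) - 6) = 1 := by
    rw [← h4, eC, eD]; group
  have hB1 : B = 1 := by
    have key : (1 : ℤ) = (10 * (n : ℤ) - 1) * (2 * (n : ℤ) - 1)
        + (10 * (n : ℤ) - 6) * (-(2 * (n : ℤ))) := by ring
    calc B = B ^ (1 : ℤ) := (zpow_one B).symm
      _ = B ^ ((10 * (n : ℤ) - 1) * (2 * (n : ℤ) - 1))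
          * B ^ ((10 * (n : ℤ) - 6) * (-(2 * (n : ℤ)))) := by rw [← zpow_add, ← key]
      _ = (B ^ (10 * (n : ℤ) - 1)) ^ (2 * (n : ℤ) - 1)
          * (B ^ (10 * (n : ℤ) - 6)) ^ (-(2 * (n : ℤ))) := by rw [zpow_mul, zpow_mul]
      _ = 1 := by rw [hB3, hB4]; simp
  have hC1 : C = 1 := by rw [eC, hB1, one_pow]
  have hD1 : D = 1 := by rw [eD, hB1, one_pow]
  intro x
  have hx : x ∈ (⊥ : Subgroup (PresentedGroup R)) := by
    refine PresentedGroup.generated_by R ⊥ ?_ x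
    intro j
    fin_cases j <;> simp [Subgroup.mem_bot] <;>
      first
        | exact h5 | exact hB1 | exact hC1 | exact hD1
  simpa [Subgroup.mem_bot] using hx
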